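/- (Points of the forward parabolic basin are wandering.) Suppose p ∈ ℝ² and N ≥ 0 are such that the forward orbit of p is defined up to time N and f^N(p) ∈ int R₊ = (-∞,1)×(-∞,0). Then there exists ε > 0 such that for every integer m ≥ 1 and every q ∈ ℝ² with ‖q − p‖ < ε whose forward orbit is defined up to time m, one has ‖f^m(q) − p‖ ≥ ε. -/
import Mathlib


open Filter

/-- The birational map f(x,y) = (y(x+a)/(x-1), x+a-1). -/
noncomputable def birat (a : ℝ) (p : ℝ × ℝ) : ℝ × ℝ :=
  (p.2 * (p.1 + a) / (p.1 - 1), p.1 + a - 1)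

/-- The inverse map f⁻¹(x,y) = (y+1-a, x(y-a)/(y+1)). -/
noncomputable def biratInv (a : ℝ) (p : ℝ × ℝ) : ℝ × ℝ :=
  (p.2 + 1 - a, p.1 * (p.2 - a) / (p.2 + 1))

/-- The forward orbit of `p` is defined up to time `n`. -/
def orbitDefined (a : ℝ) (p : ℝ × ℝ) (n : ℕ) : Prop :=
  ∀ k < n, ((birat a)^[k] p).1 ≠ 1

def Rplus : Set (ℝ × ℝ) := {p | p.1 ≤ 1 ∧ p.2 ≤ 0}
def Rminus : Set (ℝ × ℝ) := {p | 0 ≤ p.1 ∧ -1 ≤ p.2}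
def Rzero : Set (ℝ × ℝ) := {p | 1 ≤ p.1 ∧ p.2 ≤ -1}
def Rone : Set (ℝ × ℝ) := {p | p.1 ≤ 0 ∧ 0 ≤ p.2}
def intRplus : Set (ℝ × ℝ) := {p | p.1 < 1 ∧ p.2 < 0}
def intRzero : Set (ℝ × ℝ) := {p | 1 < p.1 ∧ p.2 < -1}
def intRone : Set (ℝ × ℝ) := {p | p.1 < 0 ∧ 0 < p.2}

/-- `Rw 0 = R₀`, `Rw 1 = R₁`. -/
def Rw (i : Fin 2) : Set (ℝ × ℝ) := if i = 0 then Rzero else Rone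

/-- `intRw 0 = int R₀`, `intRw 1 = int R₁`. -/
def intRw (i : Fin 2) : Set (ℝ × ℝ) := if i = 0 then intRzero else intRone

/-- Euclidean distance on ℝ². -/
noncomputable def eucDist (p q : ℝ × ℝ) : ℝ :=
  Real.sqrt ((p.1 - q.1) ^ 2 + (p.2 - q.2) ^ 2)

lemma step_lemma (a : ℝ) (ha : a < -1) {w : ℝ × ℝ} (hw : w ∈ intRplus) :
    birat a w ∈ intRplus ∧ (birat a w).1 + (birat a w).2 ≤ w.1 + w.2 - 2 := by
  obtain ⟨h1, h2⟩ := hw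
  have hx1 : w.1 - 1 < 0 := by linarith
  have hxa : w.1 + a < 0 := by linarith
  have hf1 : w.2 * (w.1 + a) / (w.1 - 1) < 0 :=
    div_neg_of_pos_of_neg (by nlinarith) hx1
  have hf1' : w.2 * (w.1 + a) / (w.1 - 1) ≤ w.2 := by
    rw [div_le_iff_of_neg hx1]
    nlinarith
  refine ⟨⟨?_, ?_⟩, ?_⟩
  · show w.2 * (w.1 + a) / (w.1 - 1) < 1
    linarith
  · show w.1 + a - 1 < 0
    linarith
  · show w.2 * (w.1 + a) / (w.1 - 1) + (w.1 + a - 1) ≤ w.1 + w.2 - 2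
    linarith

lemma iter_lemma (a : ℝ) (ha : a < -1) (n : ℕ) {w : ℝ × ℝ} (hw : w ∈ intRplus) :
    (birat a)^[n] w ∈ intRplus ∧
      ((birat a)^[n] w).1 + ((birat a)^[n] w).2 ≤ w.1 + w.2 - 2 * n := by
  induction n with
  | zero => simpa using hw
  | succ n ih =>
    obtain ⟨hmem, hS⟩ := ih
    obtain ⟨hmem', hS'⟩ := step_lemma a ha hmem
    rw [Function.iterate_succ_apply']
    refine ⟨hmem', ?_⟩
    push_cast
    linarith

lemma birat_contAt (a : ℝ) {w : ℝ × ℝ} (hw : w.1 ≠ 1) : ContinuousAt (birat a) w := by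
  have h : w.1 - 1 ≠ 0 := sub_ne_zero.mpr hw
  apply ContinuousAt.prodMk
  · exact (continuousAt_snd.mul (continuousAt_fst.add continuousAt_const)).div
      (continuousAt_fst.sub continuousAt_const) h
  · exact (continuousAt_fst.add continuousAt_const).sub continuousAt_const

lemma iterate_contAt (a : ℝ) (N : ℕ) (p : ℝ × ℝ) (hdef : orbitDefined a p N) :
    ContinuousAt ((birat a)^[N]) p := by
  induction N with
  | zero => simpa using continuousAt_id
  | succ n ih =>
    have h1 : orbitDefined a p n := fun k hk => hdef k (by omega)
    have h2 : ((birat a)^[n] p).1 ≠ 1 := hdef n (by omega)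
    rw [Function.iterate_succ']
    exact (birat_contAt a h2).comp (ih h1)

lemma dist_le_eucDist (q p : ℝ × ℝ) : dist q p ≤ eucDist q p := by
  rw [Prod.dist_eq, eucDist]
  have h1 : dist q.1 p.1 ≤ Real.sqrt ((q.1 - p.1) ^ 2 + (q.2 - p.2) ^ 2) := by
    rw [Real.dist_eq, ← Real.sqrt_sq_eq_abs]
    exact Real.sqrt_le_sqrt (by nlinarith)
  have h2 : dist q.2 p.2 ≤ Real.sqrt ((q.1 - p.1) ^ 2 + (q.2 - p.2) ^ 2) := by
    rw [Real.dist_eq, ← Real.sqrt_sq_eq_abs]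
    exact Real.sqrt_le_sqrt (by nlinarith)
  exact max_le h1 h2

theorem stmt19 (a : ℝ) (ha : a < -1) (p : ℝ × ℝ) (N : ℕ)
    (hdef : orbitDefined a p N) (hbasin : (birat a)^[N] p ∈ intRplus) :
    ∃ ε > (0 : ℝ), ∀ m : ℕ, 1 ≤ m → ∀ q : ℝ × ℝ,
      eucDist q p < ε → orbitDefined a q m → ε ≤ eucDist ((birat a)^[m] q) p := by
  set P := (birat a)^[N] p with hP
  have hcont := iterate_contAt a N p hdef
  have hopenR : IsOpen intRplus := by
    have h : intRplus = {w : ℝ × ℝ | w.1 < 1} ∩ {w : ℝ × ℝ | w.2 < 0} := rfl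
    rw [h]
    exact (isOpen_lt continuous_fst continuous_const).inter
      (isOpen_lt continuous_snd continuous_const)
  have hopen : IsOpen (intRplus ∩ Metric.ball P (1 / 4)) :=
    hopenR.inter Metric.isOpen_ball
  have hmemP : P ∈ intRplus ∩ Metric.ball P (1 / 4) :=
    ⟨hbasin, Metric.mem_ball_self (by norm_num)⟩
  have hev : ∀ᶠ w in nhds p, (birat a)^[N] w ∈ intRplus ∩ Metric.ball P (1 / 4) :=
    hcont (hopen.mem_nhds hmemP)
  obtain ⟨ε, hε, hball⟩ := Metric.eventually_nhds_iff_ball.mp hev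
  refine ⟨ε, hε, ?_⟩
  intro m hm q hq _
  by_contra h
  push_neg at h
  have hq1 : q ∈ Metric.ball p ε := by
    rw [Metric.mem_ball]
    exact lt_of_le_of_lt (dist_le_eucDist q p) hq
  have hq2 : (birat a)^[m] q ∈ Metric.ball p ε := by
    rw [Metric.mem_ball]
    exact lt_of_le_of_lt (dist_le_eucDist _ p) h
  obtain ⟨hA, hA'⟩ := hball q hq1
  obtain ⟨hB, hB'⟩ := hball _ hq2
  have hcomm : (birat a)^[N] ((birat a)^[m] q) = (birat a)^[m] ((birat a)^[N] q) := by
    rw [← Function.iterate_add_apply, ← Function.iterate_add_apply, Nat.add_comm]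
  rw [hcomm] at hB hB'
  obtain ⟨_, hS⟩ := iter_lemma a ha m hA
  have hm' : (1 : ℝ) ≤ (m : ℝ) := by exact_mod_cast hm
  rw [Metric.mem_ball, Prod.dist_eq, max_lt_iff, Real.dist_eq, Real.dist_eq] at hA' hB'
  obtain ⟨e1, e2⟩ := hA'
  obtain ⟨e3, e4⟩ := hB'
  rw [abs_lt] at e1 e2 e3 e4
  linarith [e1.1, e1.2, e2.1, e2.2, e3.1, e3.2, e4.1, e4.2]
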